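/- arXiv:1806.08519 — 2 statements merged into one kernel-verified Lean document; each statement's English description precedes it below -/
import Mathlib

section
/- The object ℕ (the full subset of ℕ) together with the morphism zero : {0} → ℕ sending 0 to 0 and the successor morphism succ : ℕ → ℕ is a parameterized natural numbers object in Rec: for all objects P, B of Rec and all morphisms f : P → B and g : B → B of Rec there exists a unique morphism h : P × ℕ → B of Rec with h(⟨p,0⟩) = f(p) and h(⟨p, n+1⟩) = g(h(⟨p,n⟩)) for all p ∈ P and n ∈ ℕ. -/
open CategoryTheory

namespace RecPaper

/-- Kleene application `{e}(n)`: apply the partial recursive function with Gödel code `e`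
to the input `n`. -/
def kap (e n : ℕ) : Part ℕ :=
  Nat.Partrec.Code.eval (Denumerable.ofNat Nat.Partrec.Code e) n

/-- The type of objects of the category `Rec`: subsets of `ℕ`. -/
def RecCat : Type := Set ℕ

/-- The underlying subset of `ℕ` of an object of `Rec`. -/
def RecCat.carrier (A : RecCat) : Set ℕ := A

/-- View a subset of `ℕ` as an object of `Rec`. -/
def RecCat.ofSet (A : Set ℕ) : RecCat := A

instance : CoeSort RecCat Type := ⟨fun A => {n : ℕ // n ∈ A.carrier}⟩

/-- A function between subsets of `ℕ` is *tracked* if there is a partial recursive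
function, defined on the whole domain, whose restriction to the domain is the given
function. -/
def Tracked {A B : RecCat} (f : A → B) : Prop :=
  ∃ g : ℕ →. ℕ, Nat.Partrec g ∧ ∀ a : A, g a.val = Part.some (f a).val

/-- The category `Rec` of subsets of `ℕ` and restrictions of partial recursive functions. -/
instance : Category RecCat where
  Hom A B := {f : A → B // Tracked f}
  id A := ⟨fun a => a, (fun n => n : ℕ → ℕ), Nat.Partrec.of_primrec Nat.Primrec.id,
    fun _ => rfl⟩
  comp {A B C} f g := ⟨fun a => g.1 (f.1 a), by
    obtain ⟨u, pu, hu⟩ := f.2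
    obtain ⟨v, pv, hv⟩ := g.2
    refine ⟨fun n => u n >>= v, pv.comp pu, fun a => ?_⟩
    simp only [hu a]
    exact (Part.bind_some _ _).trans (hv (f.1 a))⟩
  id_comp _ := rfl
  comp_id _ := rfl
  assoc _ _ _ := rfl

/-- The underlying function of a morphism of `Rec`. -/
def hfun {A B : RecCat} (f : A ⟶ B) : A → B := f.1

/-- The value of a morphism of `Rec` on an element, as a natural number. -/
def happ {A B : RecCat} (f : A ⟶ B) (a : A) : ℕ := (hfun f a).val


/-- The product set `{⟨a,b⟩ : a ∈ A, b ∈ B}`. -/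
def prodSet (A B : Set ℕ) : Set ℕ := {n | ∃ a ∈ A, ∃ b ∈ B, n = Nat.pair a b}

/-- The object `ℕ` of `Rec`: the full subset of `ℕ`. -/
def natObj : RecCat := RecCat.ofSet Set.univ

lemma mem_prodSet_pair {P : RecCat} {a : ℕ} (ha : a ∈ P.carrier) (b : ℕ) :
    Nat.pair a b ∈ (RecCat.ofSet (prodSet P.carrier Set.univ)).carrier :=
  ⟨a, ha, b, trivial, rfl⟩

lemma fst_mem {P : RecCat} (x : RecCat.ofSet (prodSet P.carrier Set.univ)) :
    (Nat.unpair x.val).1 ∈ P.carrier := by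
  obtain ⟨a, ha, b, -, he⟩ := x.2
  rw [he, Nat.unpair_pair]; exact ha

/-- `ℕ`, together with `zero : {0} → ℕ` and the successor morphism, is a parameterized
natural numbers object in `Rec`. -/
theorem rec_parameterized_nno :
    ∃ zero : RecCat.ofSet {0} ⟶ natObj,
      (∀ x, happ zero x = 0) ∧
      ∃ succ : natObj ⟶ natObj,
        (∀ n, happ succ n = n.val + 1) ∧
        ∀ (P B : RecCat) (f : P ⟶ B) (g : B ⟶ B),
          ∃! h : RecCat.ofSet (prodSet P.carrier Set.univ) ⟶ B,
            (∀ (x : RecCat.ofSet (prodSet P.carrier Set.univ)) (p : P),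
              x.val = Nat.pair p.val 0 → happ h x = happ f p) ∧
            (∀ x y : RecCat.ofSet (prodSet P.carrier Set.univ),
              (Nat.unpair x.val).1 = (Nat.unpair y.val).1 →
              (Nat.unpair x.val).2 = (Nat.unpair y.val).2 + 1 →
              happ h x = happ g (hfun h y)) := by
  refine ⟨⟨fun _ => ⟨0, trivial⟩, (fun n => n : ℕ → ℕ),
      Nat.Partrec.of_primrec Nat.Primrec.id, fun a => by
        have : a.val = 0 := a.2
        simp [this]⟩,
    fun x => rfl,
    ⟨fun n => ⟨n.val + 1, trivial⟩, (fun n => n + 1 : ℕ → ℕ),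
      Nat.Partrec.of_primrec Nat.Primrec.succ, fun a => rfl⟩,
    fun n => rfl, ?_⟩
  intro P B f g
  obtain ⟨u, pu, hu⟩ := f.2
  obtain ⟨v, pv, hv⟩ := g.2
  set X := RecCat.ofSet (prodSet P.carrier Set.univ) with hX
  -- the underlying function
  let hFun : X → B := fun x =>
    Nat.rec (f.1 ⟨(Nat.unpair x.val).1, fst_mem x⟩) (fun _ b => g.1 b) (Nat.unpair x.val).2
  -- key fact: the recursion doesn't care about the proof, only the numbers
  have key : ∀ (m : ℕ) (a : ℕ) (ha : a ∈ P.carrier),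
      (Nat.rec (u a) (fun _ IH => IH.bind v) m : Part ℕ) =
      Part.some ((Nat.rec (f.1 ⟨a, ha⟩) (fun _ b => g.1 b) m : B)).val := by
    intro m a ha
    induction m with
    | zero => exact hu ⟨a, ha⟩
    | succ k ih => simp only [ih, Part.bind_some]; exact (Part.bind_some _ _).trans (hv _)
  have tracked : Tracked hFun := by
    refine ⟨fun n => Nat.rec (u (Nat.unpair n).1) (fun _ IH => IH.bind v) (Nat.unpair n).2,
      ?_, fun x => key _ _ (fst_mem x)⟩
    have := Partrec.nat_rec
      (f := fun n : ℕ => (Nat.unpair n).2)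
      (g := fun n : ℕ => u (Nat.unpair n).1)
      (h := fun (_ : ℕ) (yi : ℕ × ℕ) => v yi.2)
      (Computable.snd.comp Computable.unpair)
      ((Partrec.nat_iff.2 pu).comp (Computable.fst.comp Computable.unpair))
      ((Partrec.nat_iff.2 pv).comp (Computable.snd.comp Computable.snd)).to₂
    exact Partrec.nat_iff.1 this
  have cond1 : ∀ (x : X) (p : P), x.val = Nat.pair p.val 0 → hFun x = f.1 p := by
    intro x p hx
    have h1 : (Nat.unpair x.val).1 = p.val := by rw [hx, Nat.unpair_pair]
    have h2 : (Nat.unpair x.val).2 = 0 := by rw [hx, Nat.unpair_pair]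
    have hpe : (⟨(Nat.unpair x.val).1, fst_mem x⟩ : P) = p := Subtype.ext h1
    show Nat.rec _ _ (Nat.unpair x.val).2 = f.1 p
    rw [h2, hpe]
    rfl
  have cond2 : ∀ x y : X,
      (Nat.unpair x.val).1 = (Nat.unpair y.val).1 →
      (Nat.unpair x.val).2 = (Nat.unpair y.val).2 + 1 →
      hFun x = g.1 (hFun y) := by
    intro x y h1 h2
    have hpe : (⟨(Nat.unpair x.val).1, fst_mem x⟩ : P) = ⟨(Nat.unpair y.val).1, fst_mem y⟩ :=
      Subtype.ext h1
    show Nat.rec _ _ (Nat.unpair x.val).2 = g.1 (hFun y)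
    rw [h2, hpe]
  refine ⟨⟨hFun, tracked⟩, ⟨fun x p hx => congrArg Subtype.val (cond1 x p hx),
    fun x y h1 h2 => congrArg Subtype.val (cond2 x y h1 h2)⟩, ?_⟩
  rintro ⟨h', htr⟩ ⟨c1, c2⟩
  apply Subtype.ext
  funext x
  -- prove h' x = hFun x by induction on the second component
  suffices H : ∀ (m : ℕ) (x : X), (Nat.unpair x.val).2 = m → h' x = hFun x from H _ x rfl
  intro m
  induction m with
  | zero =>
    intro x hm
    have hx : x.val = Nat.pair (Nat.unpair x.val).1 0 := by
      conv_lhs => rw [← Nat.pair_unpair x.val]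
      rw [hm]
    have hp := fst_mem x
    apply Subtype.ext
    have e1 := c1 x ⟨_, hp⟩ hx
    have e2 := cond1 x ⟨_, hp⟩ hx
    simpa [happ, hfun, e2] using e1
  | succ k ih =>
    intro x hm
    set y : X := ⟨Nat.pair (Nat.unpair x.val).1 k, mem_prodSet_pair (fst_mem x) k⟩ with hy
    have hy1 : (Nat.unpair x.val).1 = (Nat.unpair y.val).1 := by
      simp [hy, Nat.unpair_pair]
    have hy2 : (Nat.unpair x.val).2 = (Nat.unpair y.val).2 + 1 := by
      simp [hy, Nat.unpair_pair, hm]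
    have iH : h' y = hFun y := ih y (by simp [hy, Nat.unpair_pair])
    have e1 := c2 x y hy1 hy2
    have e2 := cond2 x y hy1 hy2
    apply Subtype.ext
    simpa [happ, hfun, e2, iH] using e1

end RecPaper
end

section
/- The Kleene realizability doctrine over Rec has weak comprehensions: for every A ⊆ ℕ and every realized predicate P on A, the subset Σ(A,P) := {⟨a,n⟩ : a ∈ A, n ∈ P(a)} together with the morphism cmp : Σ(A,P) → A of Rec induced by the first projection p₁ satisfies: ⊤ ⊑_{Σ(A,P)} cmp*P, and for every morphism f : B → A of Rec with ⊤ ⊑_B f*P there exists a (not necessarily unique) morphism f' : B → Σ(A,P) of Rec with cmp ∘ f' = f. -/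
open CategoryTheory

namespace RecPaper

/-- The realizability order `P ⊑_A Q` between realized predicates on `A`. -/
def rle (A : Set ℕ) (P Q : ℕ → Set ℕ) : Prop :=
  ∃ e : ℕ, ∀ a ∈ A, ∀ n ∈ P a, ∃ v ∈ Q a, kap e (Nat.pair a n) = Part.some v

/-- The top realized predicate `⊤(a) = {0}`. -/
def rTop : ℕ → Set ℕ := fun _ => {0}

/-- Reindexing of a realized predicate along a morphism of `Rec`. -/
def fstar {A B : RecCat} (f : A ⟶ B) (Q : ℕ → Set ℕ) : ℕ → Set ℕ :=
  fun a => {n | ∃ h : a ∈ A.carrier, n ∈ Q (happ f ⟨a, h⟩)}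

/-- The comprehension set `Σ(A,P) = {⟨a,n⟩ : a ∈ A, n ∈ P(a)}`. -/
def sigmaSet (A : RecCat) (P : ℕ → Set ℕ) : Set ℕ :=
  {m | ∃ a ∈ A.carrier, ∃ n ∈ P a, m = Nat.pair a n}

/-- The Kleene realizability doctrine over `Rec` has weak comprehensions: `Σ(A,P)` with
the first-projection morphism `cmp` satisfies `⊤ ⊑ cmp*P`, and every `f : B ⟶ A` with
`⊤ ⊑_B f*P` factors (not necessarily uniquely) through `cmp`. -/
theorem rec_weak_comprehensions :
    ∀ (A : RecCat) (P : ℕ → Set ℕ),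
      ∃ cmp : RecCat.ofSet (sigmaSet A P) ⟶ A,
        (∀ x, happ cmp x = (Nat.unpair x.val).1) ∧
        rle (sigmaSet A P) rTop (fstar cmp P) ∧
        ∀ (B : RecCat) (f : B ⟶ A),
          rle B.carrier rTop (fstar f P) →
          ∃ f' : B ⟶ RecCat.ofSet (sigmaSet A P), f' ≫ cmp = f := by
  intro A P
  -- membership of the first projection
  have hmem : ∀ x : RecCat.ofSet (sigmaSet A P), (Nat.unpair x.val).1 ∈ A.carrier := by
    rintro ⟨x, a, ha, n, hn, rfl⟩
    simpa [Nat.unpair_pair] using ha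
  have cmpTracked : Tracked (fun x : RecCat.ofSet (sigmaSet A P) =>
      (⟨(Nat.unpair x.val).1, hmem x⟩ : A)) := by
    refine ⟨(fun n => (Nat.unpair n).1 : ℕ → ℕ), ?_, fun a => rfl⟩
    exact Partrec.nat_iff.mp ((Primrec.fst.comp Primrec.unpair).to_comp.partrec)
  refine ⟨⟨fun x => ⟨(Nat.unpair x.val).1, hmem x⟩, cmpTracked⟩, fun x => rfl, ?_, ?_⟩
  · -- top ⊑ cmp* P
    have hF : Nat.Partrec (fun n => (Nat.unpair (Nat.unpair n).1).2 : ℕ → ℕ) :=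
      Partrec.nat_iff.mp
        ((Primrec.snd.comp (Primrec.unpair.comp (Primrec.fst.comp Primrec.unpair))).to_comp.partrec)
    obtain ⟨c, hc⟩ := Nat.Partrec.Code.exists_code.mp hF
    refine ⟨Encodable.encode c, ?_⟩
    rintro m ⟨a, ha, n, hn, rfl⟩ z hz
    have hz0 : z = 0 := hz
    refine ⟨n, ?_, ?_⟩
    · exact ⟨⟨a, ha, n, hn, rfl⟩, by simpa [happ, hfun, Nat.unpair_pair] using hn⟩
    · simp [kap, Denumerable.ofNat_encode, hc, hz0, Nat.unpair_pair]
  · -- weak universal property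
    rintro B f ⟨e, he⟩
    have hv : ∀ b : B, ∃ v, v ∈ P (happ f b) ∧ kap e (Nat.pair b.val 0) = Part.some v := by
      intro b
      obtain ⟨v, hv1, hv2⟩ := he b.val b.2 0 rfl
      obtain ⟨h, hvP⟩ := hv1
      refine ⟨v, ?_, hv2⟩
      have : (⟨b.val, h⟩ : B) = b := rfl
      rwa [this] at hvP
    choose V hVP hVk using hv
    have memSig : ∀ b : B, Nat.pair (happ f b) (V b) ∈ sigmaSet A P := by
      intro b
      exact ⟨happ f b, (hfun f b).2, V b, hVP b, rfl⟩
    -- tracking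
    obtain ⟨u, pu, hu⟩ := f.2
    set cde := Denumerable.ofNat Nat.Partrec.Code e with hcde
    have hk : Partrec (fun n : ℕ => kap e (Nat.pair n 0)) := by
      have h1 : Nat.Partrec cde.eval := Nat.Partrec.Code.exists_code.mpr ⟨cde, rfl⟩
      have h2 : Computable (fun n : ℕ => Nat.pair n 0) :=
        (Primrec₂.natPair.comp Primrec.id (Primrec.const 0)).to_comp
      exact (Partrec.nat_iff.mpr h1).comp h2
    have hg : Partrec (fun n : ℕ =>
        (u n).bind fun a => (kap e (Nat.pair n 0)).map fun v => Nat.pair a v) := by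
      refine (Partrec.nat_iff.mpr pu).bind ?_
      have : Partrec (fun p : ℕ × ℕ => (kap e (Nat.pair p.1 0)).map fun v => Nat.pair p.2 v) := by
        refine (hk.comp Computable.fst).map ?_
        exact (Primrec₂.natPair.comp (Primrec.snd.comp Primrec.fst) Primrec.snd).to_comp
      exact this
    refine ⟨⟨fun b => ⟨Nat.pair (happ f b) (V b), memSig b⟩, ?_⟩, ?_⟩
    · refine ⟨fun n => (u n).bind fun a => (kap e (Nat.pair n 0)).map fun v => Nat.pair a v,
        Partrec.nat_iff.mp hg, fun b => ?_⟩
      simp [hu b, hVk b, happ, hfun]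
    · apply Subtype.ext
      funext b
      apply Subtype.ext
      show (Nat.unpair (Nat.pair (happ f b) (V b))).1 = _
      simp [Nat.unpair_pair, happ, hfun]


end RecPaper
end
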